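/- For every integer t ≥ 3, (6t)^{1/3} − 1 ≤ Λ(t) < (6t)^{1/3} + 3. -/

import Mathlib

open Finset Matrix

/-- The sign `[T : e]` of an edge `e` in a triangle `T`. -/
noncomputable def triSign (T e : Finset ℕ) : ℝ :=
  if e ⊆ T ∧ e.card = 2 ∧ T.card = 3 then
    if (T \ e).max = T.max ∨ (T \ e).min = T.min then 1 else -1
  else 0

/-- A triangle family: a nonempty finite set of 3-element subsets of ℕ. -/
def IsTriFam (F : Finset (Finset ℕ)) : Prop :=
  F.Nonempty ∧ ∀ T ∈ F, T.card = 3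

/-- The edges of the support graph of a triangle family. -/
def edgesOf (F : Finset (Finset ℕ)) : Finset (Finset ℕ) :=
  F.biUnion fun T => T.powersetCard 2

/-- The vertices of the support graph of a triangle family. -/
def vertsOf (F : Finset (Finset ℕ)) : Finset ℕ :=
  F.biUnion id

/-- The signed edge-triangle incidence matrix of a triangle family. -/
noncomputable def delta1 (F : Finset (Finset ℕ)) :
    Matrix {T // T ∈ F} {e // e ∈ edgesOf F} ℝ :=
  Matrix.of fun T e => triSign T.1 e.1

/-- The smallest positive eigenvalue of a matrix. -/
noncomputable def lambdaMinPos {m : Type*} [Fintype m] (M : Matrix m m ℝ) : ℝ :=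
  sInf {μ : ℝ | 0 < μ ∧ ∃ v : m → ℝ, v ≠ 0 ∧ M.mulVec v = μ • v}

/-- `λ(𝒯)`: the smallest positive eigenvalue of `δ₁(𝒯)ᵀ δ₁(𝒯)`. -/
noncomputable def lam (F : Finset (Finset ℕ)) : ℝ :=
  lambdaMinPos ((delta1 F)ᵀ * delta1 F)

/-- The neighborhood of `x` in the support graph `Γ₀(F)`. -/
def nbrs (F : Finset (Finset ℕ)) (x : ℕ) : Finset ℕ :=
  (vertsOf F).filter fun y => x ≠ y ∧ ∃ T ∈ F, x ∈ T ∧ y ∈ T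

/-- `φ(t)`: the maximum of `λ(𝒯)` over triangle families with `|𝒯| = t`. -/
noncomputable def phi (t : ℕ) : ℝ :=
  sSup {r : ℝ | ∃ F : Finset (Finset ℕ), IsTriFam F ∧ F.card = t ∧ lam F = r}

/-- `Λ(t) = max_{1 ≤ s ≤ t} φ(s)`. -/
noncomputable def Lam (t : ℕ) : ℝ :=
  sSup {r : ℝ | ∃ s : ℕ, 1 ≤ s ∧ s ≤ t ∧ phi s = r}

/-- `H(n) = min{ s ≥ 1 : φ(C(n,3)+s) > n - 1 }`. -/
noncomputable def Hfun (n : ℕ) : ℕ :=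
  sInf {s : ℕ | 1 ≤ s ∧ (n : ℝ) - 1 < phi (n.choose 3 + s)}

/-- The triangle family `𝒯_{c,b}`: all 3-cliques of `K_c ∨ (b isolated vertices)`. -/
def Tcb (c b : ℕ) : Finset (Finset ℕ) :=
  ((Finset.Icc 1 c).powersetCard 3) ∪
    (Finset.Icc (c+1) (c+b)).biUnion
      (fun i => ((Finset.Icc 1 c).powersetCard 2).image (fun p => insert i p))


-- ### Auxiliary lemmas ###

lemma card_pair' {a b : ℕ} (h : a ≠ b) : ({a, b} : Finset ℕ).card = 2 := by
  rw [Finset.card_insert_of_notMem (by simp [h]), Finset.card_singleton]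

lemma card_triple {a b c : ℕ} (h1 : a < b) (h2 : b < c) :
    ({a, b, c} : Finset ℕ).card = 3 := by
  rw [Finset.card_insert_of_notMem (by simp; omega),
      Finset.card_insert_of_notMem (by simp; omega), Finset.card_singleton]

lemma max_triple {a b c : ℕ} (h1 : a < b) (h2 : b < c) :
    ({a, b, c} : Finset ℕ).max = WithBot.some c := by
  simp only [Finset.max_insert, Finset.max_singleton]
  rw [max_eq_right (WithBot.coe_le_coe.mpr h2.le),
    max_eq_right (WithBot.coe_le_coe.mpr (h1.trans h2).le)]

lemma min_triple {a b c : ℕ} (h1 : a < b) (h2 : b < c) :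
    ({a, b, c} : Finset ℕ).min = WithTop.some a := by
  simp only [Finset.min_insert, Finset.min_singleton]
  rw [min_eq_left (WithTop.coe_le_coe.mpr h2.le),
    min_eq_left (WithTop.coe_le_coe.mpr h1.le)]

lemma max_pair {a b : ℕ} (h : a < b) : ({a, b} : Finset ℕ).max = WithBot.some b := by
  simp only [Finset.max_insert, Finset.max_singleton]
  rw [max_eq_right (WithBot.coe_le_coe.mpr h.le)]

lemma min_pair {a b : ℕ} (h : a < b) : ({a, b} : Finset ℕ).min = WithTop.some a := by
  simp only [Finset.min_insert, Finset.min_singleton]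
  rw [min_eq_left (WithTop.coe_le_coe.mpr h.le)]

lemma sdiff_ab {a b c : ℕ} (h1 : a < b) (h2 : b < c) :
    ({a, b, c} : Finset ℕ) \ {a, b} = {c} := by
  ext x
  simp only [Finset.mem_sdiff, Finset.mem_insert, Finset.mem_singleton]
  omega

lemma sdiff_ac {a b c : ℕ} (h1 : a < b) (h2 : b < c) :
    ({a, b, c} : Finset ℕ) \ {a, c} = {b} := by
  ext x
  simp only [Finset.mem_sdiff, Finset.mem_insert, Finset.mem_singleton]
  omega

lemma sdiff_bc {a b c : ℕ} (h1 : a < b) (h2 : b < c) :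
    ({a, b, c} : Finset ℕ) \ {b, c} = {a} := by
  ext x
  simp only [Finset.mem_sdiff, Finset.mem_insert, Finset.mem_singleton]
  omega

lemma triSign_ab {a b c : ℕ} (h1 : a < b) (h2 : b < c) :
    triSign {a, b, c} {a, b} = 1 := by
  unfold triSign
  rw [if_pos ⟨by intro x hx; simp at hx ⊢; omega, card_pair' h1.ne, card_triple h1 h2⟩]
  rw [if_pos]
  left
  rw [sdiff_ab h1 h2, max_triple h1 h2, Finset.max_singleton]


lemma triSign_ac {a b c : ℕ} (h1 : a < b) (h2 : b < c) :
    triSign {a, b, c} {a, c} = -1 := by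
  unfold triSign
  rw [if_pos ⟨by intro x hx; simp at hx ⊢; omega, card_pair' (by omega), card_triple h1 h2⟩]
  rw [if_neg]
  rw [sdiff_ac h1 h2, max_triple h1 h2, min_triple h1 h2, Finset.max_singleton,
    Finset.min_singleton]
  push_neg
  constructor
  · intro hh
    have hh2 : b = c := by exact_mod_cast hh
    omega
  · intro hh
    have hh2 : b = a := by exact_mod_cast hh
    omega

lemma triSign_bc {a b c : ℕ} (h1 : a < b) (h2 : b < c) :
    triSign {a, b, c} {b, c} = 1 := by
  unfold triSign
  rw [if_pos ⟨by intro x hx; simp at hx ⊢; omega, card_pair' (by omega), card_triple h1 h2⟩]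
  rw [if_pos]
  right
  rw [sdiff_bc h1 h2, min_triple h1 h2, Finset.min_singleton]

lemma triSign_zero {T e : Finset ℕ} (h : ¬(e ⊆ T ∧ e.card = 2 ∧ T.card = 3)) :
    triSign T e = 0 := if_neg h

lemma triSign_trichotomy (T e : Finset ℕ) :
    triSign T e = 1 ∨ triSign T e = -1 ∨ triSign T e = 0 := by
  unfold triSign
  split_ifs <;> tauto

lemma triSign_mul_self {T e : Finset ℕ} (hsub : e ⊆ T) (he : e.card = 2) (hT : T.card = 3) :
    triSign T e * triSign T e = 1 := by
  unfold triSign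
  rw [if_pos ⟨hsub, he, hT⟩]
  split_ifs <;> norm_num

lemma triSign_abs_le (T e : Finset ℕ) : |triSign T e| ≤ 1 := by
  rcases triSign_trichotomy T e with h | h | h <;> rw [h] <;> norm_num

lemma card_eq_three_sorted {T : Finset ℕ} (hT : T.card = 3) :
    ∃ a b c : ℕ, a < b ∧ b < c ∧ T = {a, b, c} := by
  obtain ⟨a, b, c, hab, hac, hbc, rfl⟩ := Finset.card_eq_three.mp hT
  rcases lt_trichotomy a b with h1 | h1 | h1
  · rcases lt_trichotomy b c with h2 | h2 | h2
    · exact ⟨a, b, c, h1, h2, rfl⟩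
    · exact absurd h2 hbc
    · rcases lt_trichotomy a c with h3 | h3 | h3
      · exact ⟨a, c, b, h3, h2, by ext w; simp; tauto⟩
      · exact absurd h3 hac
      · exact ⟨c, a, b, h3, h1, by ext w; simp; tauto⟩
  · exact absurd h1 hab
  · rcases lt_trichotomy a c with h2 | h2 | h2
    · exact ⟨b, a, c, h1, h2, by ext w; simp; tauto⟩
    · exact absurd h2 hac
    · rcases lt_trichotomy b c with h3 | h3 | h3
      · exact ⟨b, c, a, h3, h2, by ext w; simp; tauto⟩
      · exact absurd h3 hbc
      · exact ⟨c, b, a, h3, h1, by ext w; simp; tauto⟩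

lemma card_eq_two_sorted {e : Finset ℕ} (he : e.card = 2) :
    ∃ u v : ℕ, u < v ∧ e = {u, v} := by
  obtain ⟨u, v, huv, rfl⟩ := Finset.card_eq_two.mp he
  rcases lt_trichotomy u v with h | h | h
  · exact ⟨u, v, h, rfl⟩
  · exact absurd h huv
  · exact ⟨v, u, h, by ext w; simp; tauto⟩

lemma pair_subset_triple_cases {a b c : ℕ} {e : Finset ℕ} (h1 : a < b) (h2 : b < c)
    (hsub : e ⊆ ({a, b, c} : Finset ℕ)) (he : e.card = 2) :
    e = {a, b} ∨ e = {a, c} ∨ e = {b, c} := by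
  by_cases ha : a ∈ e <;> by_cases hb : b ∈ e <;> by_cases hc : c ∈ e
  · exfalso
    have h3 : ({a, b, c} : Finset ℕ) ⊆ e := by
      intro x hx; simp at hx; rcases hx with rfl | rfl | rfl <;> assumption
    have := Finset.card_le_card h3
    rw [he, card_triple h1 h2] at this; omega
  · left
    refine (Finset.eq_of_subset_of_card_le ?_ ?_).symm
    · intro x hx; simp at hx; rcases hx with rfl | rfl <;> assumption
    · rw [he, card_pair' h1.ne]
  · right; left
    refine (Finset.eq_of_subset_of_card_le ?_ ?_).symm
    · intro x hx; simp at hx; rcases hx with rfl | rfl <;> assumption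
    · rw [he, card_pair' (by omega : a ≠ c)]
  · exfalso
    have h3 : e ⊆ {a} := by
      intro x hx
      have hx3 := hsub hx
      simp at hx3 ⊢
      rcases hx3 with rfl | rfl | rfl
      · rfl
      · exact absurd hx hb
      · exact absurd hx hc
    have := Finset.card_le_card h3
    rw [he, Finset.card_singleton] at this; omega
  · right; right
    refine (Finset.eq_of_subset_of_card_le ?_ ?_).symm
    · intro x hx; simp at hx; rcases hx with rfl | rfl <;> assumption
    · rw [he, card_pair' (by omega : b ≠ c)]
  · exfalso
    have h3 : e ⊆ {b} := by
      intro x hx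
      have hx3 := hsub hx
      simp at hx3 ⊢
      rcases hx3 with rfl | rfl | rfl
      · exact absurd hx ha
      · rfl
      · exact absurd hx hc
    have := Finset.card_le_card h3
    rw [he, Finset.card_singleton] at this; omega
  · exfalso
    have h3 : e ⊆ {c} := by
      intro x hx
      have hx3 := hsub hx
      simp at hx3 ⊢
      rcases hx3 with rfl | rfl | rfl
      · exact absurd hx ha
      · exact absurd hx hb
      · rfl
    have := Finset.card_le_card h3
    rw [he, Finset.card_singleton] at this; omega
  · exfalso
    have h3 : e ⊆ (∅ : Finset ℕ) := by
      intro x hx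
      have hx3 := hsub hx
      simp at hx3
      rcases hx3 with rfl | rfl | rfl
      · exact absurd hx ha
      · exact absurd hx hb
      · exact absurd hx hc
    have := Finset.card_le_card h3
    simp [he] at this

noncomputable def bsign (e : Finset ℕ) (x : ℕ) : ℝ :=
  if x ∈ e ∧ e.card = 2 then (if e.min = WithTop.some x then -1 else 1) else 0

lemma bsign_lo {u v : ℕ} (h : u < v) : bsign {u, v} u = -1 := by
  unfold bsign
  rw [if_pos ⟨by simp, card_pair' h.ne⟩, if_pos (min_pair h)]

lemma bsign_hi {u v : ℕ} (h : u < v) : bsign {u, v} v = 1 := by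
  unfold bsign
  rw [if_pos ⟨by simp, card_pair' h.ne⟩, if_neg]
  rw [min_pair h]
  intro hh
  have : u = v := by exact_mod_cast hh
  omega

lemma bsign_zero {e : Finset ℕ} {x : ℕ} (h : ¬(x ∈ e ∧ e.card = 2)) : bsign e x = 0 := if_neg h

lemma bsign_mul_self {e : Finset ℕ} {x : ℕ} (hx : x ∈ e) (he : e.card = 2) :
    bsign e x * bsign e x = 1 := by
  unfold bsign
  rw [if_pos ⟨hx, he⟩]
  split_ifs <;> norm_num

lemma bsign_trichotomy (e : Finset ℕ) (x : ℕ) : bsign e x = 1 ∨ bsign e x = -1 ∨ bsign e x = 0 := by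
  unfold bsign; split_ifs <;> tauto

lemma bsign_row_sum {e : Finset ℕ} (he : e.card = 2) : ∑ x ∈ e, bsign e x = 0 := by
  obtain ⟨u, v, huv, rfl⟩ := card_eq_two_sorted he
  rw [Finset.sum_pair huv.ne, bsign_lo huv, bsign_hi huv]
  ring

lemma T_eq_union {T e f : Finset ℕ} (hef : e ≠ f) (he : e.card = 2) (hf : f.card = 2)
    (heT : e ⊆ T) (hfT : f ⊆ T) (hT : T.card = 3) : T = e ∪ f := by
  have hsub : e ∪ f ⊆ T := Finset.union_subset heT hfT
  have hlt : e ⊂ e ∪ f := by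
    refine ⟨Finset.subset_union_left, ?_⟩
    intro hc
    have hfe : f ⊆ e := Finset.subset_union_right.trans hc
    exact hef (Finset.eq_of_subset_of_card_le hfe (by omega)).symm
  have h3 : 3 ≤ (e ∪ f).card := by
    have := Finset.card_lt_card hlt
    omega
  exact (Finset.eq_of_subset_of_card_le hsub (by omega)).symm

lemma inter_singleton_ab_ac {a b c : ℕ} (h1 : a < b) (h2 : b < c) :
    ({a, b} : Finset ℕ) ∩ {a, c} = {a} := by ext x; simp; omega

lemma inter_singleton_ab_bc {a b c : ℕ} (h1 : a < b) (h2 : b < c) :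
    ({a, b} : Finset ℕ) ∩ {b, c} = {b} := by ext x; simp; omega

lemma inter_singleton_ac_bc {a b c : ℕ} (h1 : a < b) (h2 : b < c) :
    ({a, c} : Finset ℕ) ∩ {b, c} = {c} := by ext x; simp; omega

lemma sign_prod_formula {e f : Finset ℕ} (he : e.card = 2) (hf : f.card = 2) (hef : e ≠ f)
    (hU : (e ∪ f).card = 3) :
    triSign (e ∪ f) e * triSign (e ∪ f) f = -∑ v ∈ e ∩ f, bsign e v * bsign f v := by
  obtain ⟨a, b, c, h1, h2, hT⟩ := card_eq_three_sorted hU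
  have heT : e ⊆ e ∪ f := Finset.subset_union_left
  have hfT : f ⊆ e ∪ f := Finset.subset_union_right
  rw [hT] at heT hfT
  have hca : triSign (e ∪ f) e * triSign (e ∪ f) f =
      triSign {a, b, c} e * triSign {a, b, c} f := by rw [hT]
  rw [hca]
  rcases pair_subset_triple_cases h1 h2 heT he with rfl | rfl | rfl <;>
    rcases pair_subset_triple_cases h1 h2 hfT hf with rfl | rfl | rfl
  · exact absurd rfl hef
  · rw [triSign_ab h1 h2, triSign_ac h1 h2, inter_singleton_ab_ac h1 h2, Finset.sum_singleton,
      bsign_lo h1, bsign_lo (h1.trans h2)]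
    ring
  · rw [triSign_ab h1 h2, triSign_bc h1 h2, inter_singleton_ab_bc h1 h2, Finset.sum_singleton,
      bsign_hi h1, bsign_lo h2]
    ring
  · rw [triSign_ac h1 h2, triSign_ab h1 h2, Finset.inter_comm, inter_singleton_ab_ac h1 h2,
      Finset.sum_singleton, bsign_lo (h1.trans h2), bsign_lo h1]
    ring
  · exact absurd rfl hef
  · rw [triSign_ac h1 h2, triSign_bc h1 h2, inter_singleton_ac_bc h1 h2, Finset.sum_singleton,
      bsign_hi (h1.trans h2), bsign_hi h2]
    ring
  · rw [triSign_bc h1 h2, triSign_ab h1 h2, Finset.inter_comm, inter_singleton_ab_bc h1 h2,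
      Finset.sum_singleton, bsign_lo h2, bsign_hi h1]
    ring
  · rw [triSign_bc h1 h2, triSign_ac h1 h2, Finset.inter_comm, inter_singleton_ac_bc h1 h2,
      Finset.sum_singleton, bsign_hi h2, bsign_hi (h1.trans h2)]
    ring
  · exact absurd rfl hef

lemma sum_triSign_diag {F : Finset (Finset ℕ)} (hF : ∀ T ∈ F, T.card = 3) {e : Finset ℕ}
    (he : e.card = 2) :
    ∑ T ∈ F, triSign T e * triSign T e = ((F.filter (fun T => e ⊆ T)).card : ℝ) := by
  rw [Finset.card_filter]
  push_cast
  apply Finset.sum_congr rfl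
  intro T hT
  by_cases hsub : e ⊆ T
  · rw [triSign_mul_self hsub he (hF T hT), if_pos hsub]
  · rw [triSign_zero (by tauto), if_neg hsub]
    ring

lemma sum_triSign_offdiag {F : Finset (Finset ℕ)} (hF : ∀ T ∈ F, T.card = 3) {e f : Finset ℕ}
    (he : e.card = 2) (hf : f.card = 2) (hef : e ≠ f) :
    ∑ T ∈ F, triSign T e * triSign T f =
      if e ∪ f ∈ F then triSign (e ∪ f) e * triSign (e ∪ f) f else 0 := by
  have hzero : ∀ T ∈ F, T ≠ e ∪ f → triSign T e * triSign T f = 0 := by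
    intro T hT hne
    by_cases heT : e ⊆ T
    · by_cases hfT : f ⊆ T
      · exact absurd (T_eq_union hef he hf heT hfT (hF T hT)) hne
      · rw [triSign_zero (fun h => hfT h.1)]; ring
    · rw [triSign_zero (fun h => heT h.1)]; ring
  by_cases hmem : e ∪ f ∈ F
  · rw [if_pos hmem]
    exact Finset.sum_eq_single_of_mem _ hmem hzero
  · rw [if_neg hmem]
    apply Finset.sum_eq_zero
    intro T hT
    exact hzero T hT (fun h => hmem (h ▸ hT))


lemma inner_eq_dot {m : Type*} [Fintype m] (x y : EuclideanSpace ℝ m) :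
    (inner ℝ x y : ℝ) = (x : m → ℝ) ⬝ᵥ (y : m → ℝ) := by
  rw [EuclideanSpace.inner_eq_star_dotProduct, star_trivial]; exact dotProduct_comm _ _

lemma dot_self_nonneg {m : Type*} [Fintype m] (v : m → ℝ) : 0 ≤ v ⬝ᵥ v :=
  Finset.sum_nonneg fun i _ => mul_self_nonneg (v i)

lemma dot_transpose {m ι : Type*} [Fintype m] [Fintype ι] (A : Matrix m ι ℝ)
    (v : m → ℝ) (w : ι → ℝ) : v ⬝ᵥ (A *ᵥ w) = (Aᵀ *ᵥ v) ⬝ᵥ w := by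
  rw [dotProduct_mulVec, ← transpose_transpose A, vecMul_transpose, transpose_transpose]

lemma lambdaMinPos_rayleigh {m ι : Type*} [Fintype m] [DecidableEq m] [Fintype ι]
    (A : Matrix m ι ℝ) (ζ : ι → ℝ) :
    lambdaMinPos (A * Aᵀ) * ((A *ᵥ ζ) ⬝ᵥ (A *ᵥ ζ)) ≤
      (Aᵀ *ᵥ (A *ᵥ ζ)) ⬝ᵥ (Aᵀ *ᵥ (A *ᵥ ζ)) := by
  classical
  set N : Matrix m m ℝ := A * Aᵀ with hNdef
  have hN : N.IsHermitian := by
    unfold Matrix.IsHermitian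
    rw [hNdef, conjTranspose_mul]
    simp [conjTranspose_eq_transpose_of_trivial]
  have hNt : Nᵀ = N := by
    have := hN
    unfold Matrix.IsHermitian at this
    rwa [conjTranspose_eq_transpose_of_trivial] at this
  set b := hN.eigenvectorBasis with hb
  set μ := hN.eigenvalues with hμ
  set y : m → ℝ := A *ᵥ ζ with hy
  set y' : EuclideanSpace ℝ m := (WithLp.equiv 2 (m → ℝ)).symm y with hy'
  have hyy : (y' : m → ℝ) = y := rfl
  set c : m → ℝ := fun i => (b i : m → ℝ) ⬝ᵥ y with hc
  have key : ∀ v : m → ℝ, v ⬝ᵥ (N *ᵥ v) = (Aᵀ *ᵥ v) ⬝ᵥ (Aᵀ *ᵥ v) := by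
    intro v
    rw [hNdef, ← mulVec_mulVec, dot_transpose]
  have heig : ∀ i, N *ᵥ (b i : m → ℝ) = μ i • (b i : m → ℝ) := fun i =>
    hN.mulVec_eigenvectorBasis i
  have hbnorm : ∀ i, (b i : m → ℝ) ⬝ᵥ (b i : m → ℝ) = 1 := by
    intro i
    have h3 : (inner ℝ (b i) (b i) : ℝ) = 1 := by
      have := b.orthonormal.1 i
      have h4 := real_inner_self_eq_norm_sq (b i)
      rw [this] at h4; simpa using h4
    rw [inner_eq_dot] at h3; exact h3
  have hnonneg : ∀ i, 0 ≤ μ i := by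
    intro i
    have h1 : (b i : m → ℝ) ⬝ᵥ (N *ᵥ (b i : m → ℝ)) = μ i := by
      rw [heig i, dotProduct_smul, smul_eq_mul, hbnorm i, mul_one]
    have h4 := key (b i : m → ℝ)
    rw [h1] at h4
    rw [h4]; exact dot_self_nonneg _
  have hpos : ∀ i, c i ≠ 0 → 0 < μ i := by
    intro i hci
    rcases lt_or_eq_of_le (hnonneg i) with h | h
    · exact h
    · exfalso
      have h1 : (b i : m → ℝ) ⬝ᵥ (N *ᵥ (b i : m → ℝ)) = μ i := by
        rw [heig i, dotProduct_smul, smul_eq_mul, hbnorm i, mul_one]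
      have h4 := key (b i : m → ℝ)
      rw [h1, ← h] at h4
      have h5 : Aᵀ *ᵥ (b i : m → ℝ) = 0 := by
        rw [← dotProduct_self_eq_zero (v := Aᵀ *ᵥ (b i : m → ℝ))]
        exact h4.symm
      apply hci
      rw [hc]
      show (b i : m → ℝ) ⬝ᵥ y = 0
      rw [hy, dot_transpose, h5, zero_dotProduct]
  -- Parseval
  have hinnerb : ∀ i (z : EuclideanSpace ℝ m), (inner ℝ (b i) z : ℝ) = (b i : m → ℝ) ⬝ᵥ (z : m → ℝ) :=
    fun i z => inner_eq_dot _ _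
  have hpar : y ⬝ᵥ y = ∑ i, c i * c i := by
    have := b.sum_inner_mul_inner y' y'
    rw [inner_eq_dot y' y'] at this
    rw [hyy] at this
    rw [← this]
    apply Finset.sum_congr rfl
    intro i _
    rw [inner_eq_dot y' (b i), inner_eq_dot (b i) y', hyy]
    rw [dotProduct_comm]
  set z' : EuclideanSpace ℝ m := (WithLp.equiv 2 (m → ℝ)).symm (N *ᵥ y) with hz'
  have hzz : (z' : m → ℝ) = N *ᵥ y := rfl
  have hexp : y ⬝ᵥ (N *ᵥ y) = ∑ i, μ i * (c i * c i) := by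
    have := b.sum_inner_mul_inner y' z'
    rw [inner_eq_dot y' z', hyy, hzz] at this
    rw [← this]
    apply Finset.sum_congr rfl
    intro i _
    rw [inner_eq_dot y' (b i), inner_eq_dot (b i) z', hyy, hzz]
    have : (b i : m → ℝ) ⬝ᵥ (N *ᵥ y) = μ i * c i := by
      rw [dot_transpose, hNt, heig i, smul_dotProduct, smul_eq_mul]
    rw [this, dotProduct_comm]
    ring
  have hterm : ∀ i, lambdaMinPos N * (c i * c i) ≤ μ i * (c i * c i) := by
    intro i
    by_cases hci : c i = 0
    · simp [hci]
    · have h1 : 0 < μ i := hpos i hci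
      have h2 : lambdaMinPos N ≤ μ i := by
        apply csInf_le ⟨0, fun x hx => le_of_lt hx.1⟩
        refine ⟨h1, (b i : m → ℝ), ?_, heig i⟩
        intro h0
        exact hci (by rw [hc]; show (b i : m → ℝ) ⬝ᵥ y = 0; rw [h0, zero_dotProduct])
      exact mul_le_mul_of_nonneg_right h2 (mul_self_nonneg (c i))
  calc lambdaMinPos N * (y ⬝ᵥ y) = ∑ i, lambdaMinPos N * (c i * c i) := by
        rw [hpar, Finset.mul_sum]
    _ ≤ ∑ i, μ i * (c i * c i) := Finset.sum_le_sum fun i _ => hterm i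
    _ = y ⬝ᵥ (N *ᵥ y) := hexp.symm
    _ = (Aᵀ *ᵥ y) ⬝ᵥ (Aᵀ *ᵥ y) := key y


lemma eig_shift {m ι : Type*} [Fintype m] [Fintype ι] (A : Matrix m ι ℝ) {μ : ℝ}
    {v : ι → ℝ} (hμ : 0 < μ) (hv : v ≠ 0) (hev : (Aᵀ * A) *ᵥ v = μ • v) :
    A *ᵥ v ≠ 0 ∧ (A * Aᵀ) *ᵥ (A *ᵥ v) = μ • (A *ᵥ v) := by
  have h1 : Aᵀ *ᵥ (A *ᵥ v) = μ • v := by rw [mulVec_mulVec]; exact hev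
  constructor
  · intro h0
    rw [h0, mulVec_zero] at h1
    rcases (smul_eq_zero.mp h1.symm) with h | h
    · exact absurd h (ne_of_gt hμ)
    · exact hv h
  · rw [← mulVec_mulVec, h1, mulVec_smul]

lemma lambdaMinPos_transpose {m ι : Type*} [Fintype m] [Fintype ι]
    (A : Matrix m ι ℝ) : lambdaMinPos (Aᵀ * A) = lambdaMinPos (A * Aᵀ) := by
  unfold lambdaMinPos
  congr 1
  ext μ
  constructor
  · rintro ⟨hμ, v, hv, hev⟩
    obtain ⟨h1, h2⟩ := eig_shift A hμ hv hev
    exact ⟨hμ, A *ᵥ v, h1, h2⟩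
  · rintro ⟨hμ, v, hv, hev⟩
    have hev' : (Aᵀᵀ * Aᵀ) *ᵥ v = μ • v := by rwa [transpose_transpose]
    obtain ⟨h1, h2⟩ := eig_shift Aᵀ hμ hv hev'
    rw [transpose_transpose] at h2
    exact ⟨hμ, Aᵀ *ᵥ v, h1, h2⟩

lemma mem_vertsOf {F : Finset (Finset ℕ)} {x : ℕ} :
    x ∈ vertsOf F ↔ ∃ T ∈ F, x ∈ T := by
  simp [vertsOf]

lemma subset_vertsOf {F : Finset (Finset ℕ)} {T : Finset ℕ} (hT : T ∈ F) : T ⊆ vertsOf F :=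
  fun x hx => mem_vertsOf.mpr ⟨T, hT, hx⟩

lemma pair_mem_edgesOf {F : Finset (Finset ℕ)} {x y : ℕ} (hxy : x ≠ y) {T : Finset ℕ}
    (hT : T ∈ F) (hx : x ∈ T) (hy : y ∈ T) : ({x, y} : Finset ℕ) ∈ edgesOf F := by
  rw [edgesOf, Finset.mem_biUnion]
  refine ⟨T, hT, ?_⟩
  rw [Finset.mem_powersetCard]
  constructor
  · intro z hz; simp at hz; rcases hz with rfl | rfl <;> assumption
  · rw [Finset.card_insert_of_notMem (by simp [hxy]), Finset.card_singleton]

lemma sum_degv (F : Finset (Finset ℕ)) (hF : ∀ T ∈ F, T.card = 3) :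
    ∑ x ∈ vertsOf F, (F.filter (fun T => x ∈ T)).card = 3 * F.card := by
  calc ∑ x ∈ vertsOf F, (F.filter (fun T => x ∈ T)).card
      = ∑ x ∈ vertsOf F, ∑ T ∈ F, if x ∈ T then 1 else 0 := by
        apply Finset.sum_congr rfl; intro x _; rw [Finset.card_filter]
    _ = ∑ T ∈ F, ∑ x ∈ vertsOf F, if x ∈ T then 1 else 0 := Finset.sum_comm
    _ = ∑ T ∈ F, T.card := by
        apply Finset.sum_congr rfl; intro T hT
        rw [← Finset.card_filter]
        congr 1
        ext x
        simp only [Finset.mem_filter]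
        exact ⟨fun h => h.2, fun h => ⟨subset_vertsOf hT h, h⟩⟩
    _ = 3 * F.card := by
        rw [Finset.sum_congr rfl hF, Finset.sum_const, smul_eq_mul, mul_comm]

lemma degv_double {F : Finset (Finset ℕ)} (hF : ∀ T ∈ F, T.card = 3) {x : ℕ} :
    2 * (F.filter (fun T => x ∈ T)).card =
      ∑ y ∈ nbrs F x, (F.filter (fun T => ({x, y} : Finset ℕ) ⊆ T)).card := by
  have key : ∀ T ∈ F.filter (fun T => x ∈ T), ((nbrs F x).filter (fun y => y ∈ T.erase x)) =
      T.erase x := by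
    intro T hT
    rw [Finset.mem_filter] at hT
    ext y
    simp only [Finset.mem_filter]
    refine ⟨fun h => h.2, fun h => ⟨?_, h⟩⟩
    rw [Finset.mem_erase] at h
    rw [nbrs, Finset.mem_filter]
    exact ⟨subset_vertsOf hT.1 h.2, fun hh => h.1 hh.symm, T, hT.1, hT.2, h.2⟩
  calc 2 * (F.filter (fun T => x ∈ T)).card
      = ∑ T ∈ F.filter (fun T => x ∈ T), 2 := by rw [Finset.sum_const, smul_eq_mul, mul_comm]
    _ = ∑ T ∈ F.filter (fun T => x ∈ T), (T.erase x).card := by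
        apply Finset.sum_congr rfl
        intro T hT
        rw [Finset.mem_filter] at hT
        rw [Finset.card_erase_of_mem hT.2, hF T hT.1]
    _ = ∑ T ∈ F.filter (fun T => x ∈ T), ∑ y ∈ nbrs F x, (if y ∈ T.erase x then 1 else 0) := by
        apply Finset.sum_congr rfl
        intro T hT
        rw [← Finset.card_filter, key T hT]
    _ = ∑ y ∈ nbrs F x, ∑ T ∈ F.filter (fun T => x ∈ T), (if y ∈ T.erase x then 1 else 0) :=
        Finset.sum_comm
    _ = ∑ y ∈ nbrs F x, (F.filter (fun T => ({x, y} : Finset ℕ) ⊆ T)).card := by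
        apply Finset.sum_congr rfl
        intro y hy
        rw [nbrs, Finset.mem_filter] at hy
        rw [Finset.card_filter, Finset.sum_filter]
        apply Finset.sum_congr rfl
        intro T _
        by_cases hx : x ∈ T
        · rw [if_pos hx]
          by_cases hyT : y ∈ T
          · rw [if_pos (Finset.mem_erase.mpr ⟨fun hh => hy.2.1 hh.symm, hyT⟩),
              if_pos (by rw [Finset.insert_subset_iff]; exact ⟨hx, Finset.singleton_subset_iff.mpr hyT⟩)]
          · rw [if_neg (fun hh => hyT (Finset.mem_of_mem_erase hh)),
              if_neg (fun hh => hyT (hh (by simp)))]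
        · rw [if_neg hx, if_neg (fun hh => hx (hh (by simp)))]

lemma nbrs_card_ge {F : Finset (Finset ℕ)} (hfam : IsTriFam F) (d : ℕ)
    (hd : ∀ e ∈ edgesOf F, d ≤ (F.filter (fun T => e ⊆ T)).card) {x : ℕ}
    (hx : x ∈ vertsOf F) : d + 1 ≤ (nbrs F x).card := by
  obtain ⟨T₀, hT₀, hxT₀⟩ := mem_vertsOf.mp hx
  have hT₀3 := hfam.2 T₀ hT₀
  have herase : (T₀.erase x).Nonempty := by
    rw [← Finset.card_pos, Finset.card_erase_of_mem hxT₀, hT₀3]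
    omega
  obtain ⟨y₀, hy₀⟩ := herase
  rw [Finset.mem_erase] at hy₀
  have hy₀n : y₀ ∈ nbrs F x := by
    rw [nbrs, Finset.mem_filter]
    exact ⟨subset_vertsOf hT₀ hy₀.2, fun hh => hy₀.1 hh.symm, T₀, hT₀, hxT₀, hy₀.2⟩
  have hxy : x ≠ y₀ := fun hh => hy₀.1 hh.symm
  have hedge : ({x, y₀} : Finset ℕ) ∈ edgesOf F := pair_mem_edgesOf hxy hT₀ hxT₀ hy₀.2
  set S := F.filter (fun T => ({x, y₀} : Finset ℕ) ⊆ T) with hS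
  have hcardS : d ≤ S.card := hd _ hedge
  -- map each T in S to its third vertex
  have hinj : ∀ T ∈ S, (T \ ({x, y₀} : Finset ℕ)).card = 1 := by
    intro T hT
    rw [hS, Finset.mem_filter] at hT
    rw [Finset.card_sdiff_of_subset hT.2, hfam.2 T hT.1,
      Finset.card_insert_of_notMem (by simp [hxy]), Finset.card_singleton]
  have hmap : ∀ T ∈ S, WithTop.untopD 0 (T \ {x, y₀}).min ∈ (nbrs F x).erase y₀ ∧
      T = insert (WithTop.untopD 0 (T \ {x, y₀}).min) {x, y₀} := by
    intro T hT
    obtain ⟨z, hz⟩ := Finset.card_eq_one.mp (hinj T hT)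
    rw [hS, Finset.mem_filter] at hT
    have hzmem : z ∈ T \ {x, y₀} := by rw [hz]; simp
    rw [Finset.mem_sdiff, Finset.mem_insert, Finset.mem_singleton] at hzmem
    push_neg at hzmem
    have hval : WithTop.untopD 0 (T \ {x, y₀}).min = z := by rw [hz, Finset.min_singleton]; rfl
    rw [hval]
    constructor
    · rw [Finset.mem_erase]
      refine ⟨hzmem.2.2, ?_⟩
      rw [nbrs, Finset.mem_filter]
      exact ⟨subset_vertsOf hT.1 hzmem.1, fun hh => hzmem.2.1 hh.symm, T, hT.1, hT.2 (by simp),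
        hzmem.1⟩
    · have h1 : T \ {x, y₀} ∪ {x, y₀} = T := Finset.sdiff_union_of_subset hT.2
      rw [← h1, hz]
      ext w; simp; tauto
  have hcard2 : S.card ≤ ((nbrs F x).erase y₀).card := by
    apply Finset.card_le_card_of_injOn (fun T => WithTop.untopD 0 (T \ {x, y₀}).min)
    · intro T hT; exact (hmap T hT).1
    · intro T1 h1 T2 h2 heq
      simp only at heq
      rw [(hmap T1 h1).2, (hmap T2 h2).2, heq]
  have h5 := Finset.card_erase_of_mem hy₀n
  have hpos : 0 < (nbrs F x).card := Finset.card_pos.mpr ⟨y₀, hy₀n⟩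
  have h6 : d ≤ ((nbrs F x).erase y₀).card := le_trans hcardS hcard2
  omega

lemma counting_main {F : Finset (Finset ℕ)} (hfam : IsTriFam F) (d : ℕ)
    (hd : ∀ e ∈ edgesOf F, d ≤ (F.filter (fun T => e ⊆ T)).card) :
    d * (d + 1) * (d + 2) ≤ 6 * F.card := by
  have hstep : ∀ x ∈ vertsOf F, d * (d + 1) ≤ 2 * (F.filter (fun T => x ∈ T)).card := by
    intro x hx
    rw [degv_double hfam.2]
    have hn := nbrs_card_ge hfam d hd hx
    calc d * (d + 1) = (d + 1) * d := mul_comm _ _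
      _ ≤ (nbrs F x).card * d := Nat.mul_le_mul_right d hn
      _ = (nbrs F x).card • d := (smul_eq_mul _ _).symm
      _ ≤ ∑ y ∈ nbrs F x, (F.filter (fun T => ({x, y} : Finset ℕ) ⊆ T)).card := by
          apply Finset.card_nsmul_le_sum
          intro y hy
          rw [nbrs, Finset.mem_filter] at hy
          obtain ⟨T, hT, hxT, hyT⟩ := hy.2.2
          exact hd _ (pair_mem_edgesOf hy.2.1 hT hxT hyT)
  have hV : d + 2 ≤ (vertsOf F).card := by
    obtain ⟨T₀, hT₀⟩ := hfam.1
    have : T₀.Nonempty := by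
      rw [← Finset.card_pos, hfam.2 T₀ hT₀]; omega
    obtain ⟨x, hxT₀⟩ := this
    have hx : x ∈ vertsOf F := subset_vertsOf hT₀ hxT₀
    have hn := nbrs_card_ge hfam d hd hx
    have hsub : insert x (nbrs F x) ⊆ vertsOf F := by
      intro z hz
      rw [Finset.mem_insert] at hz
      rcases hz with rfl | hz
      · exact hx
      · exact Finset.mem_of_mem_filter z hz
    have hxn : x ∉ nbrs F x := by
      rw [nbrs, Finset.mem_filter]
      rintro ⟨-, h, -⟩
      exact h rfl
    have := Finset.card_le_card hsub
    rw [Finset.card_insert_of_notMem hxn] at this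
    omega
  have hsum : ∑ x ∈ vertsOf F, d * (d + 1) ≤ ∑ x ∈ vertsOf F, 2 * (F.filter (fun T => x ∈ T)).card :=
    Finset.sum_le_sum hstep
  rw [Finset.sum_const, ← Finset.mul_sum, sum_degv F hfam.2, smul_eq_mul] at hsum
  calc d * (d + 1) * (d + 2) = (d + 2) * (d * (d + 1)) := by ring
    _ ≤ (vertsOf F).card * (d * (d + 1)) := Nat.mul_le_mul_right _ hV
    _ ≤ 2 * (3 * F.card) := hsum
    _ = 6 * F.card := by ring

lemma edges_card {F : Finset (Finset ℕ)} {f : Finset ℕ} (hf : f ∈ edgesOf F) : f.card = 2 := by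
  rw [edgesOf, Finset.mem_biUnion] at hf
  obtain ⟨T, _, hfT⟩ := hf
  exact (Finset.mem_powersetCard.mp hfT).2

lemma edges_subset {F : Finset (Finset ℕ)} {f : Finset ℕ} (hf : f ∈ edgesOf F) :
    ∃ T ∈ F, f ⊆ T := by
  rw [edgesOf, Finset.mem_biUnion] at hf
  obtain ⟨T, hT, hfT⟩ := hf
  exact ⟨T, hT, (Finset.mem_powersetCard.mp hfT).1⟩

lemma deg_pos {F : Finset (Finset ℕ)} {e : Finset ℕ} (he : e ∈ edgesOf F) :
    1 ≤ (F.filter (fun T => e ⊆ T)).card := by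
  obtain ⟨T, hT, hsub⟩ := edges_subset he
  exact Finset.card_pos.mpr ⟨T, Finset.mem_filter.mpr ⟨hT, hsub⟩⟩

lemma sum_offdiag_sq_le {F : Finset (Finset ℕ)} (hF3 : ∀ T ∈ F, T.card = 3) {e : Finset ℕ}
    (he : e ∈ edgesOf F) :
    ∑ f ∈ (edgesOf F).erase e, (∑ T ∈ F, triSign T f * triSign T e) ^ 2 ≤
      2 * ((F.filter (fun T => e ⊆ T)).card : ℝ) := by
  classical
  have he2 : e.card = 2 := edges_card he
  set U := (F.filter (fun T => e ⊆ T)).biUnion (fun T => (T.powersetCard 2).erase e) with hU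
  have hUcard : U.card ≤ 2 * (F.filter (fun T => e ⊆ T)).card := by
    calc U.card ≤ ∑ T ∈ F.filter (fun T => e ⊆ T), ((T.powersetCard 2).erase e).card :=
          Finset.card_biUnion_le
      _ ≤ ∑ T ∈ F.filter (fun T => e ⊆ T), 2 := by
          apply Finset.sum_le_sum
          intro T hT
          rw [Finset.mem_filter] at hT
          have hepow : e ∈ T.powersetCard 2 := Finset.mem_powersetCard.mpr ⟨hT.2, he2⟩
          rw [Finset.card_erase_of_mem hepow, Finset.card_powersetCard, hF3 T hT.1]
          norm_num
      _ = 2 * (F.filter (fun T => e ⊆ T)).card := by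
          rw [Finset.sum_const, smul_eq_mul, mul_comm]
  have hstep : ∀ f ∈ (edgesOf F).erase e,
      (∑ T ∈ F, triSign T f * triSign T e) ^ 2 ≤ if f ∈ U then (1 : ℝ) else 0 := by
    intro f hf
    rw [Finset.mem_erase] at hf
    have hf2 : f.card = 2 := edges_card hf.2
    rw [sum_triSign_offdiag hF3 hf2 he2 hf.1]
    by_cases hmem : f ∪ e ∈ F
    · rw [if_pos hmem]
      have hfU : f ∈ U := by
        rw [hU, Finset.mem_biUnion]
        refine ⟨f ∪ e, Finset.mem_filter.mpr ⟨hmem, Finset.subset_union_right⟩, ?_⟩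
        rw [Finset.mem_erase]
        exact ⟨hf.1, Finset.mem_powersetCard.mpr ⟨Finset.subset_union_left, hf2⟩⟩
      rw [if_pos hfU]
      rcases triSign_trichotomy (f ∪ e) f with h1 | h1 | h1 <;>
        rcases triSign_trichotomy (f ∪ e) e with h2 | h2 | h2 <;>
        rw [h1, h2] <;> norm_num
    · rw [if_neg hmem]
      split_ifs <;> norm_num
  calc ∑ f ∈ (edgesOf F).erase e, (∑ T ∈ F, triSign T f * triSign T e) ^ 2
      ≤ ∑ f ∈ (edgesOf F).erase e, if f ∈ U then (1 : ℝ) else 0 := Finset.sum_le_sum hstep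
    _ = ((((edgesOf F).erase e).filter (fun f => f ∈ U)).card : ℝ) := by
        rw [Finset.sum_boole]
    _ ≤ (U.card : ℝ) := by
        have : (((edgesOf F).erase e).filter (fun f => f ∈ U)) ⊆ U := fun f hf =>
          (Finset.mem_filter.mp hf).2
        exact_mod_cast Finset.card_le_card this
    _ ≤ 2 * ((F.filter (fun T => e ⊆ T)).card : ℝ) := by exact_mod_cast hUcard

lemma lam_le_deg_add_two {F : Finset (Finset ℕ)} (hfam : IsTriFam F) {e : Finset ℕ}
    (he : e ∈ edgesOf F) :
    lam F ≤ ((F.filter (fun T => e ⊆ T)).card : ℝ) + 2 := by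
  classical
  have he2 : e.card = 2 := edges_card he
  set D : ℝ := ((F.filter (fun T => e ⊆ T)).card : ℝ) with hD
  have hD1 : (1 : ℝ) ≤ D := by
    rw [hD]; exact_mod_cast deg_pos he
  set A := delta1 F with hA
  have hlam : lam F = lambdaMinPos (A * Aᵀ) := lambdaMinPos_transpose A
  set ζ : {e' // e' ∈ edgesOf F} → ℝ := Pi.single ⟨e, he⟩ 1 with hζ
  have hy : A *ᵥ ζ = fun T => triSign T.1 e := by
    rw [hζ, mulVec_single]
    funext T
    rw [Pi.smul_apply, op_smul_eq_mul, mul_one]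
    rfl
  have hyy : (A *ᵥ ζ) ⬝ᵥ (A *ᵥ ζ) = D := by
    rw [hy, hD]
    show ∑ T : {T // T ∈ F}, triSign T.1 e * triSign T.1 e = _
    rw [Finset.sum_coe_sort F (fun T => triSign T e * triSign T e),
      sum_triSign_diag hfam.2 he2]
  have hw : ∀ f : {e' // e' ∈ edgesOf F},
      (Aᵀ *ᵥ (A *ᵥ ζ)) f = ∑ T ∈ F, triSign T f.1 * triSign T e := by
    intro f
    rw [hy]
    show ∑ T : {T // T ∈ F}, Aᵀ f T * triSign T.1 e = _
    rw [← Finset.sum_coe_sort F (fun T => triSign T f.1 * triSign T e)]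
    apply Finset.sum_congr rfl
    intro T _
    rfl
  have hww : (Aᵀ *ᵥ (A *ᵥ ζ)) ⬝ᵥ (Aᵀ *ᵥ (A *ᵥ ζ)) ≤ D ^ 2 + 2 * D := by
    have h1 : (Aᵀ *ᵥ (A *ᵥ ζ)) ⬝ᵥ (Aᵀ *ᵥ (A *ᵥ ζ)) =
        ∑ f ∈ edgesOf F, (∑ T ∈ F, triSign T f * triSign T e) ^ 2 := by
      show ∑ f : {e' // e' ∈ edgesOf F}, (Aᵀ *ᵥ (A *ᵥ ζ)) f * (Aᵀ *ᵥ (A *ᵥ ζ)) f = _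
      rw [← Finset.sum_coe_sort (edgesOf F)
        (fun f => (∑ T ∈ F, triSign T f * triSign T e) ^ 2)]
      apply Finset.sum_congr rfl
      intro f _
      rw [hw f, sq]
    rw [h1, ← Finset.sum_erase_add _ _ he, sum_triSign_diag hfam.2 he2]
    have := sum_offdiag_sq_le hfam.2 he
    rw [← hD] at this ⊢
    nlinarith [this]
  have hray := lambdaMinPos_rayleigh A ζ
  rw [hyy] at hray
  have hfin : lam F * D ≤ D ^ 2 + 2 * D := by
    rw [hlam]
    exact le_trans hray hww
  nlinarith [hfin, hD1]

def cplx (n : ℕ) : Finset (Finset ℕ) := (Finset.range n).powersetCard 3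

lemma cplx_trifam {n : ℕ} (hn : 3 ≤ n) : IsTriFam (cplx n) := by
  constructor
  · refine ⟨{0, 1, 2}, Finset.mem_powersetCard.mpr ⟨?_, card_triple (by omega) (by omega)⟩⟩
    intro x hx
    simp at hx ⊢
    omega
  · intro T hT
    exact (Finset.mem_powersetCard.mp hT).2

lemma cplx_card (n : ℕ) : (cplx n).card = n.choose 3 := by
  rw [cplx, Finset.card_powersetCard, Finset.card_range]

lemma bsign_pair_mul {x y : ℕ} (h : x ≠ y) : bsign {x, y} x * bsign {x, y} y = -1 := by
  rcases lt_or_gt_of_ne h with h1 | h1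
  · rw [bsign_lo h1, bsign_hi h1]; ring
  · rw [Finset.pair_comm x y, bsign_hi h1, bsign_lo h1]; ring

lemma edges_cplx {n : ℕ} (hn : 3 ≤ n) : edgesOf (cplx n) = (Finset.range n).powersetCard 2 := by
  ext e
  constructor
  · intro he
    rw [edgesOf, Finset.mem_biUnion] at he
    obtain ⟨T, hT, heT⟩ := he
    rw [cplx, Finset.mem_powersetCard] at hT
    rw [Finset.mem_powersetCard] at heT ⊢
    exact ⟨heT.1.trans hT.1, heT.2⟩
  · intro he
    rw [Finset.mem_powersetCard] at he
    have hlt : (e.card : ℕ) < (Finset.range n).card := by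
      rw [Finset.card_range, he.2]; omega
    obtain ⟨z, hz, hze⟩ : ∃ z ∈ Finset.range n, z ∉ e := by
      by_contra hc
      push_neg at hc
      have : Finset.range n ⊆ e := hc
      have := Finset.card_le_card this
      omega
    rw [edgesOf, Finset.mem_biUnion]
    refine ⟨insert z e, ?_, ?_⟩
    · rw [cplx, Finset.mem_powersetCard]
      constructor
      · exact Finset.insert_subset hz he.1
      · rw [Finset.card_insert_of_notMem hze, he.2]
    · rw [Finset.mem_powersetCard]
      exact ⟨Finset.subset_insert _ _, he.2⟩

lemma cplx_deg {n : ℕ} {e : Finset ℕ} (hsub : e ⊆ Finset.range n) (he : e.card = 2) :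
    ((cplx n).filter (fun T => e ⊆ T)).card = n - 2 := by
  have key : (cplx n).filter (fun T => e ⊆ T) =
      (Finset.range n \ e).image (fun z => insert z e) := by
    ext T
    rw [Finset.mem_filter, Finset.mem_image, cplx, Finset.mem_powersetCard]
    constructor
    · rintro ⟨⟨hTsub, hT3⟩, heT⟩
      have hc1 : (T \ e).card = 1 := by
        rw [Finset.card_sdiff_of_subset heT, hT3, he]
      obtain ⟨z, hz⟩ := Finset.card_eq_one.mp hc1
      have hzmem : z ∈ T \ e := by rw [hz]; simp
      rw [Finset.mem_sdiff] at hzmem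
      refine ⟨z, ?_, ?_⟩
      · rw [Finset.mem_sdiff]
        exact ⟨hTsub hzmem.1, hzmem.2⟩
      · have h1 : T \ e ∪ e = T := Finset.sdiff_union_of_subset heT
        rw [← h1, hz]
        ext w; simp
    · rintro ⟨z, hz, rfl⟩
      rw [Finset.mem_sdiff] at hz
      refine ⟨⟨Finset.insert_subset hz.1 hsub, ?_⟩, Finset.subset_insert _ _⟩
      rw [Finset.card_insert_of_notMem hz.2, he]
  rw [key, Finset.card_image_of_injOn, Finset.card_sdiff_of_subset hsub, Finset.card_range, he]
  intro z1 h1 z2 h2 heq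
  simp only at heq
  rw [Finset.mem_coe, Finset.mem_sdiff] at h1 h2
  have : z2 ∈ insert z1 e := by rw [heq]; simp
  rw [Finset.mem_insert] at this
  rcases this with h | h
  · exact h.symm
  · exact absurd h h2.2

lemma vert_deg {n : ℕ} {x : ℕ} (hx : x ∈ Finset.range n) :
    (((Finset.range n).powersetCard 2).filter (fun e => x ∈ e)).card = n - 1 := by
  have key : ((Finset.range n).powersetCard 2).filter (fun e => x ∈ e) =
      ((Finset.range n).erase x).image (fun z => {x, z}) := by
    ext e
    rw [Finset.mem_filter, Finset.mem_image, Finset.mem_powersetCard]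
    constructor
    · rintro ⟨⟨hsub, h2⟩, hxe⟩
      have hc1 : (e.erase x).card = 1 := by rw [Finset.card_erase_of_mem hxe, h2]
      obtain ⟨z, hz⟩ := Finset.card_eq_one.mp hc1
      have hzmem : z ∈ e.erase x := by rw [hz]; simp
      rw [Finset.mem_erase] at hzmem
      refine ⟨z, ?_, ?_⟩
      · rw [Finset.mem_erase]
        exact ⟨hzmem.1, hsub hzmem.2⟩
      · have h1 : insert x (e.erase x) = e := Finset.insert_erase hxe
        rw [← h1, hz]
    · rintro ⟨z, hz, rfl⟩
      rw [Finset.mem_erase] at hz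
      constructor
      constructor
      · intro w hw
        simp at hw
        rcases hw with rfl | rfl
        · exact hx
        · exact hz.2
      · rw [Finset.card_insert_of_notMem (by simp [Ne.symm hz.1]), Finset.card_singleton]
      · simp
  rw [key, Finset.card_image_of_injOn, Finset.card_erase_of_mem hx, Finset.card_range]
  intro z1 h1 z2 h2 heq
  simp only at heq
  rw [Finset.mem_coe, Finset.mem_erase] at h1 h2
  have : z2 ∈ ({x, z1} : Finset ℕ) := by rw [heq]; simp
  rw [Finset.mem_insert, Finset.mem_singleton] at this
  rcases this with h | h
  · exact absurd h h2.1
  · exact h.symm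

lemma cplx_BtB {n : ℕ} (hn : 3 ≤ n) {x y : ℕ} (hx : x ∈ Finset.range n)
    (hy : y ∈ Finset.range n) :
    ∑ e ∈ (Finset.range n).powersetCard 2, bsign e x * bsign e y =
      (if x = y then (n : ℝ) else 0) - 1 := by
  by_cases hxy : x = y
  · subst hxy
    rw [if_pos rfl]
    have hstep : ∀ e ∈ (Finset.range n).powersetCard 2,
        bsign e x * bsign e x = if x ∈ e then (1 : ℝ) else 0 := by
      intro e he
      by_cases hxe : x ∈ e
      · rw [if_pos hxe, bsign_mul_self hxe (Finset.mem_powersetCard.mp he).2]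
      · rw [if_neg hxe, bsign_zero (by tauto)]
        ring
    rw [Finset.sum_congr rfl hstep, Finset.sum_boole, vert_deg hx]
    have : (1 : ℝ) ≤ (n : ℝ) := by exact_mod_cast (by omega : 1 ≤ n)
    push_cast [Nat.cast_sub (by omega : 1 ≤ n)]
    ring
  · rw [if_neg hxy]
    have hmem : ({x, y} : Finset ℕ) ∈ (Finset.range n).powersetCard 2 := by
      rw [Finset.mem_powersetCard]
      constructor
      · intro w hw
        simp at hw
        rcases hw with rfl | rfl <;> assumption
      · exact card_pair' hxy
    rw [Finset.sum_eq_single_of_mem _ hmem, bsign_pair_mul hxy]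
    · ring
    · intro e he hne
      rw [Finset.mem_powersetCard] at he
      by_cases hxe : x ∈ e
      · by_cases hye : y ∈ e
        · exfalso
          apply hne
          refine (Finset.eq_of_subset_of_card_le ?_ ?_).symm
          · intro w hw; simp at hw; rcases hw with rfl | rfl <;> assumption
          · rw [he.2, card_pair' hxy]
        · rw [bsign_zero (fun h => hye h.1)]
          ring
      · rw [bsign_zero (fun h => hxe h.1)]
        ring

lemma cplx_Mentry {n : ℕ} (hn : 3 ≤ n) {e f : Finset ℕ}
    (he : e ∈ (Finset.range n).powersetCard 2) (hf : f ∈ (Finset.range n).powersetCard 2) :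
    ∑ T ∈ cplx n, triSign T e * triSign T f =
      (if e = f then (n : ℝ) else 0) - ∑ x ∈ Finset.range n, bsign e x * bsign f x := by
  rw [Finset.mem_powersetCard] at he hf
  by_cases hef : e = f
  · subst hef
    rw [if_pos rfl, sum_triSign_diag (cplx_trifam hn).2 he.2, cplx_deg he.1 he.2]
    have hstep : ∀ x ∈ Finset.range n,
        bsign e x * bsign e x = if x ∈ e then (1 : ℝ) else 0 := by
      intro x _
      by_cases hxe : x ∈ e
      · rw [if_pos hxe, bsign_mul_self hxe he.2]
      · rw [if_neg hxe, bsign_zero (by tauto)]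
        ring
    rw [Finset.sum_congr rfl hstep, Finset.sum_boole]
    have hfe : (Finset.range n).filter (fun x => x ∈ e) = e := by
      ext x
      rw [Finset.mem_filter]
      exact ⟨fun h => h.2, fun h => ⟨he.1 h, h⟩⟩
    rw [hfe, he.2]
    push_cast [Nat.cast_sub (by omega : 2 ≤ n)]
    ring
  · rw [if_neg hef, sum_triSign_offdiag (cplx_trifam hn).2 he.2 hf.2 hef]
    have hinterle : (e ∩ f).card ≤ 1 := by
      by_contra hc
      push_neg at hc
      apply hef
      have h1 : e ∩ f = e := by
        apply Finset.eq_of_subset_of_card_le Finset.inter_subset_left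
        omega
      have h2 : e ⊆ f := by
        rw [← h1]; exact Finset.inter_subset_right
      exact Finset.eq_of_subset_of_card_le h2 (by omega)
    have hcup : (e ∪ f).card + (e ∩ f).card = 4 := by
      rw [Finset.card_union_add_card_inter, he.2, hf.2]
    rcases Nat.le_one_iff_eq_zero_or_eq_one.mp hinterle with hc0 | hc1
    · have hU : (e ∪ f).card = 4 := by omega
      rw [if_neg (fun hmem => by
        rw [cplx, Finset.mem_powersetCard] at hmem
        omega)]
      have hempty : e ∩ f = ∅ := Finset.card_eq_zero.mp hc0
      have hstep : ∀ x ∈ Finset.range n, bsign e x * bsign f x = 0 := by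
        intro x _
        by_cases hxe : x ∈ e
        · by_cases hxf : x ∈ f
          · exfalso
            have : x ∈ e ∩ f := Finset.mem_inter.mpr ⟨hxe, hxf⟩
            rw [hempty] at this
            exact absurd this (Finset.notMem_empty x)
          · rw [bsign_zero (e := f) (by tauto)]
            ring
        · rw [bsign_zero (e := e) (by tauto)]
          ring
      rw [Finset.sum_congr rfl hstep]
      simp
    · have hU : (e ∪ f).card = 3 := by omega
      have hmem : e ∪ f ∈ cplx n := by
        rw [cplx, Finset.mem_powersetCard]
        exact ⟨Finset.union_subset he.1 hf.1, hU⟩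
      rw [if_pos hmem, sign_prod_formula he.2 hf.2 hef hU]
      have hrestrict : ∑ x ∈ Finset.range n, bsign e x * bsign f x =
          ∑ x ∈ e ∩ f, bsign e x * bsign f x := by
        apply (Finset.sum_subset ?_ ?_).symm
        · exact (Finset.inter_subset_left).trans he.1
        · intro x _ hxnot
          rw [Finset.mem_inter] at hxnot
          push_neg at hxnot
          by_cases hxe : x ∈ e
          · rw [bsign_zero (e := f) (fun h => (hxnot hxe) h.1)]
            ring
          · rw [bsign_zero (e := e) (by tauto)]
            ring
      rw [hrestrict]
      ring

noncomputable def Bmat (n : ℕ) : Matrix {e // e ∈ edgesOf (cplx n)} (Fin n) ℝ :=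
  Matrix.of fun e x => bsign e.1 x

lemma cplx_M_eq {n : ℕ} (hn : 3 ≤ n) :
    (delta1 (cplx n))ᵀ * delta1 (cplx n) =
      (n : ℝ) • 1 - Bmat n * (Bmat n)ᵀ := by
  ext e f
  rw [Matrix.mul_apply]
  have hL : ∀ T : {T // T ∈ cplx n},
      (delta1 (cplx n))ᵀ e T * delta1 (cplx n) T f = triSign T.1 e.1 * triSign T.1 f.1 :=
    fun T => rfl
  rw [Finset.sum_congr rfl (fun T _ => hL T)]
  rw [Finset.sum_coe_sort (cplx n) (fun T => triSign T e.1 * triSign T f.1)]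
  have hee : e.1 ∈ (Finset.range n).powersetCard 2 := by rw [← edges_cplx hn]; exact e.2
  have hff : f.1 ∈ (Finset.range n).powersetCard 2 := by rw [← edges_cplx hn]; exact f.2
  rw [cplx_Mentry hn hee hff]
  rw [Matrix.sub_apply, Matrix.smul_apply, Matrix.one_apply, Matrix.mul_apply]
  have hR : ∀ x : Fin n, Bmat n e x * (Bmat n)ᵀ x f = bsign e.1 x * bsign f.1 x :=
    fun x => rfl
  rw [Finset.sum_congr rfl (fun x _ => hR x)]
  have hcast : ∑ x : Fin n, bsign e.1 (x : ℕ) * bsign f.1 (x : ℕ) =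
      ∑ x ∈ Finset.range n, bsign e.1 x * bsign f.1 x :=
    Fin.sum_univ_eq_sum_range (fun x => bsign e.1 x * bsign f.1 x) n
  rw [hcast]
  congr 1
  by_cases hef : e = f
  · rw [if_pos (Subtype.ext_iff.mp hef), if_pos hef, smul_eq_mul, mul_one]
  · rw [if_neg (fun h => hef (Subtype.ext h)), if_neg hef, smul_eq_mul, mul_zero]

lemma cplx_BtB_mat {n : ℕ} (hn : 3 ≤ n) :
    (Bmat n)ᵀ * Bmat n = (n : ℝ) • 1 - Matrix.of (fun _ _ : Fin n => (1 : ℝ)) := by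
  ext x y
  rw [Matrix.mul_apply]
  have hL : ∀ e : {e // e ∈ edgesOf (cplx n)},
      (Bmat n)ᵀ x e * Bmat n e y = bsign e.1 x * bsign e.1 y := fun e => rfl
  rw [Finset.sum_congr rfl (fun e _ => hL e)]
  rw [Finset.sum_coe_sort (edgesOf (cplx n)) (fun e => bsign e x * bsign e y)]
  rw [edges_cplx hn]
  rw [cplx_BtB hn (Finset.mem_range.mpr x.isLt) (Finset.mem_range.mpr y.isLt)]
  rw [Matrix.sub_apply, Matrix.smul_apply, Matrix.one_apply, Matrix.of_apply]
  congr 1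
  by_cases hxy : x = y
  · rw [if_pos hxy, if_pos (by rw [hxy]), smul_eq_mul, mul_one]
  · rw [if_neg hxy, if_neg (fun h => hxy (Fin.ext (by exact_mod_cast h))), smul_eq_mul, mul_zero]

lemma cplx_BJ {n : ℕ} (hn : 3 ≤ n) :
    Bmat n * Matrix.of (fun _ _ : Fin n => (1 : ℝ)) = 0 := by
  ext e y
  rw [Matrix.mul_apply]
  have hee : e.1 ∈ (Finset.range n).powersetCard 2 := by rw [← edges_cplx hn]; exact e.2
  rw [Finset.mem_powersetCard] at hee
  have hL : ∀ x : Fin n, Bmat n e x * Matrix.of (fun _ _ : Fin n => (1 : ℝ)) x y =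
      bsign e.1 x := fun x => by
    show bsign e.1 x * 1 = bsign e.1 x
    rw [mul_one]
  rw [Finset.sum_congr rfl (fun x _ => hL x)]
  have hcast : ∑ x : Fin n, bsign e.1 (x : ℕ) = ∑ x ∈ Finset.range n, bsign e.1 x :=
    Fin.sum_univ_eq_sum_range (fun x => bsign e.1 x) n
  rw [hcast]
  have hrestrict : ∑ x ∈ Finset.range n, bsign e.1 x = ∑ x ∈ e.1, bsign e.1 x := by
    apply (Finset.sum_subset hee.1 ?_).symm
    intro x _ hxe
    exact bsign_zero (fun h => hxe h.1)
  rw [hrestrict, bsign_row_sum hee.2]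
  rfl

lemma cplx_MM {n : ℕ} (hn : 3 ≤ n) :
    ((delta1 (cplx n))ᵀ * delta1 (cplx n)) * ((delta1 (cplx n))ᵀ * delta1 (cplx n)) =
      (n : ℝ) • ((delta1 (cplx n))ᵀ * delta1 (cplx n)) := by
  rw [cplx_M_eq hn]
  set B := Bmat n with hB
  set J := (Matrix.of (fun _ _ : Fin n => (1 : ℝ))) with hJ
  set D := B * Bᵀ with hD
  have hDD : D * D = (n : ℝ) • D := by
    calc D * D = B * ((Bᵀ * B) * Bᵀ) := by
          rw [hD, Matrix.mul_assoc, Matrix.mul_assoc]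
      _ = B * (((n : ℝ) • 1 - J) * Bᵀ) := by rw [cplx_BtB_mat hn]
      _ = B * ((n : ℝ) • Bᵀ - J * Bᵀ) := by
          rw [Matrix.sub_mul, Matrix.smul_mul, Matrix.one_mul]
      _ = (n : ℝ) • (B * Bᵀ) - B * (J * Bᵀ) := by
          rw [Matrix.mul_sub, Matrix.mul_smul]
      _ = (n : ℝ) • D - (B * J) * Bᵀ := by rw [Matrix.mul_assoc, hD]
      _ = (n : ℝ) • D := by rw [cplx_BJ hn, Matrix.zero_mul, sub_zero]
  have expand : ((n : ℝ) • 1 - D) * ((n : ℝ) • 1 - D) =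
      (n : ℝ) • ((n : ℝ) • (1 : Matrix _ _ ℝ)) - (n : ℝ) • D - ((n : ℝ) • D - D * D) := by
    rw [Matrix.sub_mul, Matrix.mul_sub, Matrix.mul_sub, Matrix.smul_mul, Matrix.smul_mul,
      Matrix.one_mul, Matrix.mul_smul, Matrix.mul_one, Matrix.one_mul]
  rw [expand, hDD, sub_self, sub_zero, smul_sub]

lemma cplx_lam {n : ℕ} (hn : 3 ≤ n) : lam (cplx n) = (n : ℝ) := by
  classical
  unfold lam lambdaMinPos
  set M := (delta1 (cplx n))ᵀ * delta1 (cplx n) with hM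
  have he₀ : ({0, 1} : Finset ℕ) ∈ edgesOf (cplx n) := by
    rw [edges_cplx hn, Finset.mem_powersetCard]
    constructor
    · intro w hw
      simp at hw ⊢
      omega
    · exact card_pair' (by omega)
  have hsub01 : ({0, 1} : Finset ℕ) ⊆ Finset.range n := by
    intro w hw; simp at hw ⊢; omega
  have hMee : M ⟨{0, 1}, he₀⟩ ⟨{0, 1}, he₀⟩ = ((n - 2 : ℕ) : ℝ) := by
    rw [hM, Matrix.mul_apply]
    have hL : ∀ T : {T // T ∈ cplx n},
        (delta1 (cplx n))ᵀ ⟨{0, 1}, he₀⟩ T * delta1 (cplx n) T ⟨{0, 1}, he₀⟩ =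
          triSign T.1 {0, 1} * triSign T.1 {0, 1} := fun T => rfl
    rw [Finset.sum_congr rfl (fun T _ => hL T)]
    rw [Finset.sum_coe_sort (cplx n) (fun T => triSign T {0, 1} * triSign T {0, 1})]
    rw [sum_triSign_diag (cplx_trifam hn).2 (card_pair' (by omega)),
      cplx_deg hsub01 (card_pair' (by omega))]
  have hset : {μ : ℝ | 0 < μ ∧ ∃ v, v ≠ 0 ∧ M.mulVec v = μ • v} = {(n : ℝ)} := by
    apply Set.eq_singleton_iff_unique_mem.mpr
    constructor
    · refine ⟨by exact_mod_cast (by omega : 0 < n), M *ᵥ Pi.single ⟨{0, 1}, he₀⟩ 1, ?_, ?_⟩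
      · intro h0
        have h1 := congrFun h0 ⟨{0, 1}, he₀⟩
        rw [Matrix.mulVec_single] at h1
        simp only [Pi.smul_apply, op_smul_eq_mul, mul_one, Matrix.col_apply, Pi.zero_apply] at h1
        rw [hMee] at h1
        have : n - 2 = 0 := by exact_mod_cast h1
        omega
      · rw [Matrix.mulVec_mulVec, cplx_MM hn, Matrix.smul_mulVec]
    · rintro μ ⟨hμ, v, hv, hev⟩
      have h2 : (M * M) *ᵥ v = ((n : ℝ) • M) *ᵥ v := by rw [cplx_MM hn]
      rw [← Matrix.mulVec_mulVec, hev, Matrix.mulVec_smul, hev,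
        Matrix.smul_mulVec, hev, smul_smul, smul_smul] at h2
      have h3 : (μ * μ - (n : ℝ) * μ) • v = 0 := by
        rw [sub_smul, h2, sub_self]
      rcases smul_eq_zero.mp h3 with h | h
      · have h4 : μ * μ = (n : ℝ) * μ := by linarith [sub_eq_zero.mp h]
        exact mul_right_cancel₀ (ne_of_gt hμ) h4
      · exact absurd h hv
  rw [hset]
  exact csInf_singleton _

lemma two_choose (m : ℕ) : 2 * (m + 1).choose 2 = (m + 1) * m := by
  induction m with
  | zero => rfl
  | succ k ih =>
    rw [show k + 1 + 1 = (k + 1) + 1 from rfl, Nat.choose_succ_succ (k + 1) 1,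
      Nat.choose_one_right, Nat.mul_add, ih]
    ring

lemma six_choose (m : ℕ) : 6 * (m + 2).choose 3 = (m + 2) * (m + 1) * m := by
  induction m with
  | zero => rfl
  | succ k ih =>
    have h1 : k + 1 + 2 = (k + 2) + 1 := by omega
    rw [h1, Nat.choose_succ_succ (k + 2) 2, Nat.mul_add, ih,
      show 6 = 3 * 2 from rfl, Nat.mul_assoc, two_choose]
    ring

lemma exists_trifam (s : ℕ) (hs : 1 ≤ s) : ∃ F, IsTriFam F ∧ F.card = s := by
  refine ⟨(Finset.range s).image (fun i => ({0, 1, i + 2} : Finset ℕ)), ⟨⟨?_, ?_⟩, ?_⟩⟩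
  · obtain ⟨i, hi⟩ := Finset.nonempty_range_iff.mpr (by omega : s ≠ 0)
    exact ⟨{0, 1, i + 2}, Finset.mem_image_of_mem _ hi⟩
  · intro T hT
    rw [Finset.mem_image] at hT
    obtain ⟨i, _, rfl⟩ := hT
    exact card_triple (by omega) (by omega)
  · rw [Finset.card_image_of_injOn, Finset.card_range]
    intro i _ j _ heq
    simp only at heq
    have : i + 2 ∈ ({0, 1, j + 2} : Finset ℕ) := by
      rw [← heq]; simp
    simp at this
    omega

lemma lam_le_bound {F : Finset (Finset ℕ)} {t : ℕ} (hfam : IsTriFam F) (hcard : F.card ≤ t)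
    (ht : 3 ≤ t) : lam F ≤ (6 * (t : ℝ)) ^ ((1 : ℝ) / 3) + 2 := by
  set x := (6 * (t : ℝ)) ^ ((1 : ℝ) / 3) with hx
  have h6t : (1 : ℝ) ≤ 6 * (t : ℝ) := by
    have : (3 : ℝ) ≤ (t : ℝ) := by exact_mod_cast ht
    linarith
  have hx1 : 1 ≤ x := by
    rw [hx]
    calc (1 : ℝ) = 1 ^ ((1 : ℝ) / 3) := (Real.one_rpow _).symm
      _ ≤ (6 * (t : ℝ)) ^ ((1 : ℝ) / 3) := Real.rpow_le_rpow zero_le_one h6t (by norm_num)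
  by_cases hL : lam F ≤ 3
  · linarith
  · push_neg at hL
    set L := lam F with hLdef
    set d : ℕ := ⌈L - 2⌉₊ with hd
    have hLd : L - 2 ≤ (d : ℝ) := Nat.le_ceil _
    have hdD : ∀ e ∈ edgesOf F, d ≤ (F.filter (fun T => e ⊆ T)).card := by
      intro e he
      rw [hd, Nat.ceil_le]
      have h1 := lam_le_deg_add_two hfam he
      rw [← hLdef] at h1
      linarith
    have hcount := counting_main hfam d hdD
    have h6 : (d : ℝ) * ((d : ℝ) + 1) * ((d : ℝ) + 2) ≤ 6 * (t : ℝ) := by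
      have h2 : d * (d + 1) * (d + 2) ≤ 6 * t := le_trans hcount (by omega)
      exact_mod_cast h2
    have hL2 : (0 : ℝ) < L - 2 := by linarith
    have hcube : (L - 2) ^ 3 ≤ 6 * (t : ℝ) := by
      have hdnn : (0 : ℝ) ≤ (d : ℝ) := Nat.cast_nonneg d
      have hc1 : (L - 2) ^ 3 ≤ (d : ℝ) ^ 3 := pow_le_pow_left₀ hL2.le hLd 3
      have hc1' : (d : ℝ) ^ 3 = (d : ℝ) * (d : ℝ) * (d : ℝ) := by ring
      rw [hc1'] at hc1
      have hc2 : (d : ℝ) * (d : ℝ) * (d : ℝ) ≤ (d : ℝ) * ((d : ℝ) + 1) * ((d : ℝ) + 2) := by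
        nlinarith [hdnn]
      linarith
    have hfin : L - 2 ≤ x := by
      have h2 : ((L - 2) ^ 3 : ℝ) ^ ((1 : ℝ) / 3) ≤ (6 * (t : ℝ)) ^ ((1 : ℝ) / 3) :=
        Real.rpow_le_rpow (by positivity) hcube (by norm_num)
      rwa [← Real.rpow_natCast (L - 2) 3, ← Real.rpow_mul hL2.le,
        show ((3 : ℕ) : ℝ) * ((1 : ℝ) / 3) = 1 by norm_num, Real.rpow_one] at h2
    linarith

theorem stmt9' (t : ℕ) (ht : 3 ≤ t) :
    (6 * (t : ℝ)) ^ ((1 : ℝ) / 3) - 1 ≤ Lam t ∧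
    Lam t < (6 * (t : ℝ)) ^ ((1 : ℝ) / 3) + 3 := by
  classical
  set x := (6 * (t : ℝ)) ^ ((1 : ℝ) / 3) with hx
  have hxnn : 0 ≤ x := Real.rpow_nonneg (by positivity) _
  -- upper bound machinery
  have hphi_le : ∀ s : ℕ, 1 ≤ s → s ≤ t → phi s ≤ x + 2 := by
    intro s hs1 hst
    apply Real.sSup_le
    · rintro r ⟨F, hfam, hFc, rfl⟩
      exact lam_le_bound hfam (by omega) ht
    · linarith
  have hLam_le : Lam t ≤ x + 2 := by
    apply Real.sSup_le
    · rintro r ⟨s, hs1, hst, rfl⟩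
      exact hphi_le s hs1 hst
    · linarith
  refine ⟨?_, by linarith⟩
  -- lower bound
  have hP3 : (fun m => m.choose 3 ≤ t) 3 := by
    simp only [Nat.choose_self]
    omega
  set n := Nat.findGreatest (fun m => m.choose 3 ≤ t) (t + 2) with hn
  have hspec : (Nat.findGreatest (fun m => m.choose 3 ≤ t) (t + 2)).choose 3 ≤ t :=
    Nat.findGreatest_spec (P := fun m => m.choose 3 ≤ t) (m := 3) (by omega) hP3
  have h3n : 3 ≤ n := by
    rw [hn]
    exact Nat.le_findGreatest (by omega) hP3
  have hPn : n.choose 3 ≤ t := by rw [hn]; exact hspec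
  have hnlt : n < t + 2 := by
    rw [hn]
    rcases lt_or_eq_of_le (Nat.findGreatest_le (P := fun m => m.choose 3 ≤ t) (t + 2)) with h | h
    · exact h
    · exfalso
      have hPt2 : (t + 2).choose 3 ≤ t := by rw [← h]; exact hspec
      have h6 : 6 * ((t + 2).choose 3) = (t + 2) * (t + 1) * t := six_choose t
      have h7 : (t + 2) * (t + 1) * t ≤ 6 * t := by rw [← h6]; omega
      have h8 : 20 * t ≤ (t + 2) * (t + 1) * t := by
        calc 20 * t = (5 * 4) * t := by ring
          _ ≤ ((t + 2) * (t + 1)) * t :=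
            Nat.mul_le_mul_right t (Nat.mul_le_mul (by omega) (by omega))
      have h9 : 20 * t ≤ 6 * t := le_trans h8 h7
      omega
  have hnP1 : ¬ ((n + 1).choose 3 ≤ t) := by
    have := Nat.findGreatest_is_greatest (P := fun m => m.choose 3 ≤ t) (n := t + 2)
      (k := n + 1) (by rw [← hn]; omega) (by omega)
    exact this
  push_neg at hnP1
  have h6c : 6 * ((n + 1).choose 3) = (n + 1) * n * (n - 1) := by
    have h1 : n + 1 = (n - 1) + 2 := by omega
    rw [h1, six_choose (n - 1)]
    congr 1
    · congr 1 <;> omega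
  have hgt : 6 * t < (n + 1) * n * (n - 1) := by
    rw [← h6c]
    omega
  have hcast : ((n : ℝ) + 1) * (n : ℝ) * ((n : ℝ) - 1) = (((n + 1) * n * (n - 1) : ℕ) : ℝ) := by
    push_cast [Nat.cast_sub (by omega : 1 ≤ n)]
    ring
  have hcube : 6 * (t : ℝ) < ((n : ℝ) + 1) ^ 3 := by
    have h1 : (6 * t : ℕ) < ((n + 1) * n * (n - 1) : ℕ) := hgt
    have h2 : (6 * (t : ℝ)) < ((n : ℝ) + 1) * (n : ℝ) * ((n : ℝ) - 1) := by
      rw [hcast]; exact_mod_cast h1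
    have hn3 : (3 : ℝ) ≤ (n : ℝ) := by exact_mod_cast h3n
    nlinarith [h2, hn3]
  have hxn : x < (n : ℝ) + 1 := by
    have h2 : (6 * (t : ℝ)) ^ ((1 : ℝ) / 3) < (((n : ℝ) + 1) ^ 3) ^ ((1 : ℝ) / 3) :=
      Real.rpow_lt_rpow (by positivity) hcube (by norm_num)
    rwa [← Real.rpow_natCast ((n : ℝ) + 1) 3, ← Real.rpow_mul (by positivity),
      show ((3 : ℕ) : ℝ) * ((1 : ℝ) / 3) = 1 by norm_num, Real.rpow_one] at h2
  -- Lam t ≥ n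
  have hs₀1 : 1 ≤ n.choose 3 := Nat.choose_pos h3n
  have hs₀t : n.choose 3 ≤ t := hPn
  have hphi_ge : (n : ℝ) ≤ phi (n.choose 3) := by
    apply le_csSup
    · refine ⟨x + 2, ?_⟩
      rintro r ⟨F, hfam, hFc, rfl⟩
      exact lam_le_bound hfam (by omega) ht
    · exact ⟨cplx n, cplx_trifam h3n, cplx_card n, cplx_lam h3n⟩
  have hLam_ge : phi (n.choose 3) ≤ Lam t := by
    apply le_csSup
    · refine ⟨x + 2, ?_⟩
      rintro r ⟨s, hs1, hst, rfl⟩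
      exact hphi_le s hs1 hst
    · exact ⟨n.choose 3, hs₀1, hs₀t, rfl⟩
  linarith

/-- For every `t ≥ 3`, `(6t)^{1/3} - 1 ≤ Λ(t) < (6t)^{1/3} + 3`. -/
theorem stmt9 (t : ℕ) (ht : 3 ≤ t) :
    (6 * (t : ℝ)) ^ ((1 : ℝ) / 3) - 1 ≤ Lam t ∧
    Lam t < (6 * (t : ℝ)) ^ ((1 : ℝ) / 3) + 3 :=
  stmt9' t ht
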